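/- Let g : ℝ → ℂ be a function with g(x) = 1 - c·x²/4 + o(x²) as x → 0, where c ≥ 0 is a real constant, and suppose |g(x)| ≤ 1 for all x. Then with m_k = 4^k, a_k = (4^k+2^k)/2, b_k = (4^k-2^k)/2, the limit lim_{k→∞} g(x/√(m_k))^{a_k} · g(-x/√(m_k))^{b_k} equals exp(-c x²/4) for each fixed real x. -/

import Mathlib

open Asymptotics Filter

lemma pow_sub_pow_norm_le (z p : ℂ) (hz : ‖z‖ ≤ 1) (hp : ‖p‖ ≤ 1) (n : ℕ) :
    ‖z ^ n - p ^ n‖ ≤ n * ‖z - p‖ := by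
  rw [← geom_sum₂_mul z p n]
  calc ‖(∑ i ∈ Finset.range n, z ^ i * p ^ (n - 1 - i)) * (z - p)‖
      = ‖∑ i ∈ Finset.range n, z ^ i * p ^ (n - 1 - i)‖ * ‖z - p‖ := norm_mul _ _
    _ ≤ n * ‖z - p‖ := by
        gcongr
        calc ‖∑ i ∈ Finset.range n, z ^ i * p ^ (n - 1 - i)‖
            ≤ ∑ i ∈ Finset.range n, ‖z ^ i * p ^ (n - 1 - i)‖ := norm_sum_le _ _
          _ ≤ ∑ _i ∈ Finset.range n, 1 := by
              refine Finset.sum_le_sum fun i _ => ?_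
              rw [norm_mul, norm_pow, norm_pow]
              exact mul_le_one₀ (pow_le_one₀ (norm_nonneg _) hz)
                (by positivity) (pow_le_one₀ (norm_nonneg _) hp)
          _ = n := by simp

lemma key_ineq (z w p : ℂ) (hz : ‖z‖ ≤ 1) (hw : ‖w‖ ≤ 1) (hp : ‖p‖ ≤ 1) (a b : ℕ) :
    ‖z ^ a * w ^ b - p ^ (a + b)‖ ≤ a * ‖z - p‖ + b * ‖w - p‖ := by
  have h2 : ‖w ^ b‖ ≤ 1 := by
    rw [norm_pow]; exact pow_le_one₀ (norm_nonneg _) hw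
  have h3 : ‖p ^ a‖ ≤ 1 := by
    rw [norm_pow]; exact pow_le_one₀ (norm_nonneg _) hp
  calc ‖z ^ a * w ^ b - p ^ (a + b)‖
      = ‖(z ^ a - p ^ a) * w ^ b + p ^ a * (w ^ b - p ^ b)‖ := by rw [pow_add]; ring_nf
    _ ≤ ‖(z ^ a - p ^ a) * w ^ b‖ + ‖p ^ a * (w ^ b - p ^ b)‖ := norm_add_le _ _
    _ = ‖z ^ a - p ^ a‖ * ‖w ^ b‖ + ‖p ^ a‖ * ‖w ^ b - p ^ b‖ := by rw [norm_mul, norm_mul]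
    _ ≤ ‖z ^ a - p ^ a‖ * 1 + 1 * ‖w ^ b - p ^ b‖ := by gcongr <;> exact norm_nonneg _
    _ = ‖z ^ a - p ^ a‖ + ‖w ^ b - p ^ b‖ := by ring
    _ ≤ a * ‖z - p‖ + b * ‖w - p‖ :=
        add_le_add (pow_sub_pow_norm_le z p hz hp a) (pow_sub_pow_norm_le w p hw hp b)

/-- Let `g : ℝ → ℂ` be continuous at `0` with `g 0 = 1`, admit the second-order expansion
`g(x) = 1 - (c/4)x² + o(x²)` near `0` with `c ≥ 0`, and satisfy `|g(x)| ≤ 1` for all `x`.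
Then with `m_k = 4^k`, `a_k = (4^k+2^k)/2`, `b_k = (4^k-2^k)/2`,
`lim_{k→∞} g(x/√(m_k))^{a_k} · g(-x/√(m_k))^{b_k} = exp(-c x²/4)` for each fixed `x`. -/
theorem limit_gaussian (g : ℝ → ℂ) (c : ℝ) (hc : 0 ≤ c)
    (hg0 : g 0 = 1) (hcont : ContinuousAt g 0)
    (hexp : (fun x : ℝ => g x - (1 - (c / 4 : ℂ) * (x : ℂ) ^ 2)) =o[nhds 0]
      (fun x : ℝ => x ^ 2))
    (hbd : ∀ x : ℝ, ‖g x‖ ≤ 1) (x : ℝ) :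
    Tendsto (fun k : ℕ =>
        (g (x / Real.sqrt (4 ^ k))) ^ ((4 ^ k + 2 ^ k) / 2 : ℕ) *
        (g (-(x / Real.sqrt (4 ^ k)))) ^ ((4 ^ k - 2 ^ k) / 2 : ℕ))
      atTop (nhds (Complex.exp (-((c : ℂ) * (x : ℂ) ^ 2) / 4))) := by
  have h24 : ∀ k : ℕ, ((2:ℝ) ^ k) ^ 2 = 4 ^ k := by
    intro k; rw [← pow_mul, mul_comm, pow_mul]; norm_num
  have hsq : ∀ k : ℕ, Real.sqrt ((4:ℝ) ^ k) = 2 ^ k := by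
    intro k; rw [← h24 k]; exact Real.sqrt_sq (by positivity)
  simp only [hsq]
  set w : ℝ := c * x ^ 2 / 4 with hw_def
  have hw : 0 ≤ w := by positivity
  set p : ℕ → ℂ := fun k => ((1 - w / 4 ^ k : ℝ) : ℂ) with hp_def
  have hpt : ∀ k : ℕ, p k = 1 - (c / 4 : ℂ) * ((x / 2 ^ k : ℝ) : ℂ) ^ 2 := by
    intro k
    have h2 : ((2:ℂ) ^ k) ^ 2 = 4 ^ k := by rw [← pow_mul, mul_comm, pow_mul]; norm_num
    simp only [hp_def, hw_def]
    push_cast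
    rw [div_pow, h2]
    ring
  -- exponent arithmetic
  have hab : ∀ k : ℕ, ((4:ℕ) ^ k + 2 ^ k) / 2 + (4 ^ k - 2 ^ k) / 2 = 4 ^ k := by
    intro k
    obtain ⟨j, hj⟩ := Nat.even_mul_succ_self (2 ^ k)
    have hj' : 2 ^ k * 2 ^ k + 2 ^ k = j + j := by rw [Nat.mul_succ] at hj; omega
    have h4 : (4:ℕ) ^ k = 2 ^ k * 2 ^ k := by rw [← mul_pow]; norm_num
    have hAB : (4:ℕ) ^ k + 2 ^ k = j + j := by rw [h4]; exact hj'
    have hle : (2:ℕ) ^ k ≤ 4 ^ k := Nat.pow_le_pow_left (by norm_num) k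
    omega
  -- t tends to zero
  have ht0 : Tendsto (fun k : ℕ => x / 2 ^ k) atTop (nhds 0) := by
    have h := tendsto_pow_atTop_nhds_zero_of_lt_one
      (by norm_num : (0:ℝ) ≤ 1/2) (by norm_num : (1:ℝ)/2 < 1)
    have h2 := h.const_mul x
    rw [mul_zero] at h2
    refine h2.congr fun k => ?_
    rw [div_pow, one_pow, mul_one_div]
  -- big-O comparison
  have heq : ∀ k : ℕ, (x / 2 ^ k) ^ 2 = x ^ 2 * ((1:ℝ)/4) ^ k := by
    intro k
    rw [div_pow, h24, div_pow, one_pow, mul_one_div]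
  have hO : (fun k : ℕ => (x / 2 ^ k) ^ 2) =O[atTop] (fun k : ℕ => ((1:ℝ)/4) ^ k) := by
    refine Asymptotics.IsBigO.congr'
      ((isBigO_refl (fun k : ℕ => ((1:ℝ)/4) ^ k) atTop).const_mul_left (x ^ 2))
      ?_ EventuallyEq.rfl
    filter_upwards with k
    exact (heq k).symm
  have hd1 : (fun k : ℕ => g (x / 2 ^ k) - p k) =o[atTop] (fun k : ℕ => ((1:ℝ)/4) ^ k) := by
    refine ((hexp.comp_tendsto ht0).congr' ?_ EventuallyEq.rfl).trans_isBigO hO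
    filter_upwards with k
    simp only [Function.comp_def]
    rw [hpt k]
  have hd2 : (fun k : ℕ => g (-(x / 2 ^ k)) - p k) =o[atTop] (fun k : ℕ => ((1:ℝ)/4) ^ k) := by
    have htneg : Tendsto (fun k : ℕ => -(x / 2 ^ k)) atTop (nhds 0) := by
      simpa using ht0.neg
    refine ((hexp.comp_tendsto htneg).congr' ?_ ?_).trans_isBigO hO
    · filter_upwards with k
      simp only [Function.comp_def]
      rw [hpt k]
      push_cast
      ring_nf
    · filter_upwards with k
      simp only [Function.comp_def, neg_sq]
  -- scaled differences tend to zero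
  have hscaled : ∀ d : ℕ → ℂ, (d =o[atTop] fun k : ℕ => ((1:ℝ)/4) ^ k) →
      Tendsto (fun k : ℕ => (4:ℝ) ^ k * ‖d k‖) atTop (nhds 0) := by
    intro d hd
    have h := hd.norm_left.tendsto_div_nhds_zero
    refine h.congr fun k => ?_
    rw [div_pow, one_pow, div_div_eq_mul_div]
    ring
  have hD1 := hscaled _ hd1
  have hD2 := hscaled _ hd2
  -- ‖p k‖ ≤ 1 eventually
  have h4top : Tendsto (fun k : ℕ => (4:ℝ) ^ k) atTop atTop :=
    tendsto_pow_atTop_atTop_of_one_lt (by norm_num)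
  have hp_le : ∀ᶠ k : ℕ in atTop, ‖p k‖ ≤ 1 := by
    filter_upwards [h4top.eventually_ge_atTop w] with k hk
    rw [hp_def]
    simp only [Complex.norm_real]
    rw [Real.norm_eq_abs, abs_le]
    have h4pos : (0:ℝ) < 4 ^ k := by positivity
    constructor
    · have : w / 4 ^ k ≤ 1 := (div_le_one h4pos).mpr hk
      linarith
    · have : 0 ≤ w / 4 ^ k := div_nonneg hw h4pos.le
      linarith
  -- limit of p k ^ 4^k
  have hPlim : Tendsto (fun k : ℕ => p k ^ ((4:ℕ) ^ k)) atTop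
      (nhds (Complex.exp (-((c : ℂ) * (x : ℂ) ^ 2) / 4))) := by
    have h4 : Tendsto (fun k : ℕ => (4:ℕ) ^ k) atTop atTop :=
      tendsto_pow_atTop_atTop_of_one_lt (by norm_num)
    have hr := (Real.tendsto_one_add_div_pow_exp (-w)).comp h4
    have h2 := (Complex.continuous_ofReal.tendsto (Real.exp (-w))).comp hr
    have hval : Complex.exp (-((c : ℂ) * (x : ℂ) ^ 2) / 4) = ((Real.exp (-w) : ℝ) : ℂ) := by
      rw [Complex.ofReal_exp]
      congr 1
      rw [hw_def]
      push_cast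
      ring
    rw [hval]
    refine h2.congr fun k => ?_
    simp only [Function.comp_def, hp_def]
    push_cast
    ring
  -- difference tends to zero
  have hdiff : Tendsto (fun k : ℕ =>
      (g (x / 2 ^ k)) ^ ((4 ^ k + 2 ^ k) / 2 : ℕ) *
        (g (-(x / 2 ^ k))) ^ ((4 ^ k - 2 ^ k) / 2 : ℕ) - p k ^ ((4:ℕ) ^ k))
      atTop (nhds 0) := by
    rw [tendsto_zero_iff_norm_tendsto_zero]
    refine squeeze_zero' (Eventually.of_forall fun k => norm_nonneg _) ?_ (by simpa using hD1.add hD2)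
    filter_upwards [hp_le] with k hk
    have hkey := key_ineq (g (x / 2 ^ k)) (g (-(x / 2 ^ k))) (p k) (hbd _) (hbd _) hk
      ((4 ^ k + 2 ^ k) / 2) ((4 ^ k - 2 ^ k) / 2)
    rw [hab k] at hkey
    refine hkey.trans ?_
    have hcast : ∀ n : ℕ, n ≤ 4 ^ k → (n : ℝ) ≤ (4:ℝ) ^ k := by
      intro n hn
      calc (n : ℝ) ≤ ((4:ℕ) ^ k : ℕ) := by exact_mod_cast hn
        _ = (4:ℝ) ^ k := by push_cast; ring
    have ha : ((4:ℕ) ^ k + 2 ^ k) / 2 ≤ 4 ^ k := Nat.le.intro (hab k)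
    have hb : ((4:ℕ) ^ k - 2 ^ k) / 2 ≤ 4 ^ k :=
      Nat.le.intro (by rw [Nat.add_comm]; exact hab k)
    exact add_le_add
      (mul_le_mul_of_nonneg_right (hcast _ ha) (norm_nonneg _))
      (mul_le_mul_of_nonneg_right (hcast _ hb) (norm_nonneg _))
  have := hPlim.add hdiff
  rw [add_zero] at this
  refine this.congr fun k => ?_
  ring
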